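/- Let V be symmetric positive definite, S skew-symmetric, B = −(I+S)V^{−1}, and set C₁ = ‖V^{−1/2}(I+S)V^{−1}(I−S)V^{1/2}‖, C₂ = ‖V^{−1/2}(I+S)V^{−1/2}‖²·‖V‖. For 0 < h < 2/C₂, let R be the positive definite solution of R = 2hσ²I + (I+hB)R(I+hB'). Then R ⪯ σ²·((2 − h(C₂−C₁))/(2 − hC₂))·V in the Loewner order. -/

import Mathlib

open Matrix
open scoped Matrix.Norms.L2Operator

namespace LyapAux

variable {n : ℕ}

lemma ct_eq (A : Matrix (Fin n) (Fin n) ℝ) : Aᴴ = Aᵀ := by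
  ext i j; simp [Matrix.conjTranspose_apply]

lemma dot_mulVec' (A : Matrix (Fin n) (Fin n) ℝ) (x z : Fin n → ℝ) :
    x ⬝ᵥ (A *ᵥ z) = (Aᵀ *ᵥ x) ⬝ᵥ z := by
  rw [dotProduct_mulVec, ← vecMul_transpose, transpose_transpose]

lemma dot_symm {A : Matrix (Fin n) (Fin n) ℝ} (hA : Aᵀ = A) (x z : Fin n → ℝ) :
    x ⬝ᵥ (A *ᵥ z) = (A *ᵥ x) ⬝ᵥ z := by
  rw [dot_mulVec', hA]

lemma dot_self_nonneg (x : Fin n → ℝ) : 0 ≤ x ⬝ᵥ x :=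
  Finset.sum_nonneg fun i _ => mul_self_nonneg _

lemma smul_one_sub_posSemidef {A : Matrix (Fin n) (Fin n) ℝ} (hA : A.IsHermitian) {c : ℝ}
    (hc : ∀ i, hA.eigenvalues i ≤ c) :
    (c • (1 : Matrix (Fin n) (Fin n) ℝ) - A).PosSemidef := by
  have key : c • (1 : Matrix (Fin n) (Fin n) ℝ) - A =
      (hA.eigenvectorUnitary : Matrix (Fin n) (Fin n) ℝ) *
        diagonal (fun i => c - hA.eigenvalues i) *
        ((hA.eigenvectorUnitary : Matrix (Fin n) (Fin n) ℝ))ᴴ := by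
    have hdiag : diagonal (fun i => c - hA.eigenvalues i)
        = c • (1 : Matrix (Fin n) (Fin n) ℝ) - diagonal (RCLike.ofReal ∘ hA.eigenvalues) := by
      ext i j
      rcases eq_or_ne i j with rfl | hij
      · simp [Matrix.diagonal_apply_eq, Matrix.one_apply_eq]
      · simp [Matrix.diagonal_apply_ne _ hij, Matrix.one_apply_ne hij]
    rw [hdiag, Matrix.mul_sub, Matrix.sub_mul, Matrix.mul_smul, mul_one, Matrix.smul_mul,
      ← Matrix.star_eq_conjTranspose,
      (Matrix.mem_unitaryGroup_iff).mp (hA.eigenvectorUnitary).2]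
    exact congrArg (c • (1 : Matrix (Fin n) (Fin n) ℝ) - ·) hA.spectral_theorem
  rw [key]
  exact (Matrix.posSemidef_diagonal_iff.mpr fun i => by
    simpa using hc i).mul_mul_conjTranspose_same _

lemma exists_top (hn : 0 < n) {A : Matrix (Fin n) (Fin n) ℝ} (hA : Aᵀ = A) :
    ∃ (μ : ℝ) (u : Fin n → ℝ), u ⬝ᵥ u = 1 ∧ A *ᵥ u = μ • u ∧
      (μ • (1 : Matrix (Fin n) (Fin n) ℝ) - A).PosSemidef := by
  have hA' : A.IsHermitian := by rw [IsHermitian, ct_eq]; exact hA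
  have : Nonempty (Fin n) := ⟨⟨0, hn⟩⟩
  obtain ⟨i, -, hi⟩ := Finset.exists_max_image Finset.univ hA'.eigenvalues Finset.univ_nonempty
  have hnorm : ‖hA'.eigenvectorBasis i‖ = 1 := hA'.eigenvectorBasis.orthonormal.1 i
  refine ⟨hA'.eigenvalues i, hA'.eigenvectorBasis i, ?_, hA'.mulVec_eigenvectorBasis i,
    smul_one_sub_posSemidef hA' (fun j => hi j (Finset.mem_univ j))⟩
  have h3 : Real.sqrt (∑ j, ‖hA'.eigenvectorBasis i j‖ ^ 2) = 1 := by
    rw [← EuclideanSpace.norm_eq]; exact hnorm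
  have h4 : ∑ j, (hA'.eigenvectorBasis i j) ^ 2 = 1 := by
    rw [Real.sqrt_eq_one] at h3
    simpa [Real.norm_eq_abs, sq_abs] using h3
  simpa [dotProduct, sq] using h4

lemma quad_le {A : Matrix (Fin n) (Fin n) ℝ} {c : ℝ}
    (hA : (c • (1 : Matrix (Fin n) (Fin n) ℝ) - A).PosSemidef) (x : Fin n → ℝ) :
    x ⬝ᵥ (A *ᵥ x) ≤ c * (x ⬝ᵥ x) := by
  have h := hA.dotProduct_mulVec_nonneg x
  simp only [star_trivial, Matrix.sub_mulVec, Matrix.smul_mulVec, Matrix.one_mulVec,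
    dotProduct_sub, dotProduct_smul, smul_eq_mul] at h
  linarith

lemma dot_self_eq (x : Fin n → ℝ) :
    x ⬝ᵥ x = ‖(EuclideanSpace.equiv (Fin n) ℝ).symm x‖ ^ 2 := by
  rw [EuclideanSpace.norm_eq, Real.sq_sqrt (Finset.sum_nonneg fun j _ => sq_nonneg _)]
  simp [dotProduct, sq]

lemma norm_mulVec_sq (A : Matrix (Fin n) (Fin n) ℝ) (x : Fin n → ℝ) :
    (A *ᵥ x) ⬝ᵥ (A *ᵥ x) ≤ ‖A‖ ^ 2 * (x ⬝ᵥ x) := by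
  have h1 := Matrix.l2_opNorm_mulVec A ((EuclideanSpace.equiv (Fin n) ℝ).symm x)
  have h2 := mul_self_le_mul_self (norm_nonneg _) h1
  rw [dot_self_eq, dot_self_eq]
  calc ‖(EuclideanSpace.equiv (Fin n) ℝ).symm (A *ᵥ x)‖ ^ 2
      ≤ (‖A‖ * ‖(EuclideanSpace.equiv (Fin n) ℝ).symm x‖) ^ 2 := by
        rw [sq, sq]; exact h2
    _ = ‖A‖ ^ 2 * ‖(EuclideanSpace.equiv (Fin n) ℝ).symm x‖ ^ 2 := by ring

lemma unit_dot {A : Matrix (Fin n) (Fin n) ℝ} (hA : A.IsHermitian) (i : Fin n) :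
    (⇑(hA.eigenvectorBasis i) : Fin n → ℝ) ⬝ᵥ ⇑(hA.eigenvectorBasis i) = 1 := by
  have hnorm : ‖hA.eigenvectorBasis i‖ = 1 := hA.eigenvectorBasis.orthonormal.1 i
  have h3 : Real.sqrt (∑ j, ‖hA.eigenvectorBasis i j‖ ^ 2) = 1 := by
    rw [← EuclideanSpace.norm_eq]; exact hnorm
  have h4 : ∑ j, (hA.eigenvectorBasis i j) ^ 2 = 1 := by
    rw [Real.sqrt_eq_one] at h3
    simpa [Real.norm_eq_abs, sq_abs] using h3
  simpa [dotProduct, sq] using h4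

lemma smul_one_psd (r : ℝ) (hr : 0 ≤ r) :
    (r • (1 : Matrix (Fin n) (Fin n) ℝ)).PosSemidef := by
  refine PosSemidef.of_dotProduct_mulVec_nonneg ?_ ?_
  · rw [Matrix.IsHermitian, ct_eq, transpose_smul, transpose_one]
  · intro x
    rw [star_trivial, Matrix.smul_mulVec, Matrix.one_mulVec, dotProduct_smul,
      smul_eq_mul]
    exact mul_nonneg hr (dot_self_nonneg x)

end LyapAux

open LyapAux

set_option maxHeartbeats 2000000 in
/-- with C₁ = ‖V^{−1/2}(I+S)V⁻¹(I−S)V^{1/2}‖ and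
C₂ = ‖V^{−1/2}(I+S)V^{−1/2}‖²‖V‖ (W denotes the positive definite square root
V^{1/2}, so W⁻¹ = V^{−1/2}), if 0 < h < 2/C₂ and R is the positive definite
solution of the discrete Lyapunov equation, then
R ⪯ σ²·((2 − h(C₂−C₁))/(2 − hC₂))·V in the Loewner order. -/
theorem lyapunov_solution_upper_bound
    (n : ℕ) (V S B R : Matrix (Fin n) (Fin n) ℝ)
    (hV : V.PosDef) (hVsym : Vᵀ = V) (hSskew : Sᵀ = -S)
    (hB : B = -((1 + S) * V⁻¹))
    (W : Matrix (Fin n) (Fin n) ℝ) (hW : W.PosDef) (hWsq : W * W = V)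
    (C₁ C₂ : ℝ)
    (hC₁ : C₁ = ‖W⁻¹ * (1 + S) * V⁻¹ * (1 - S) * W‖)
    (hC₂ : C₂ = ‖W⁻¹ * (1 + S) * W⁻¹‖ ^ 2 * ‖V‖)
    (h σ : ℝ) (hh0 : 0 < h) (hh : h < 2 / C₂) (hσ : 0 < σ)
    (hR : R.PosDef)
    (hLyap : R = (2 * h * σ ^ 2) • (1 : Matrix (Fin n) (Fin n) ℝ)
        + (1 + h • B) * R * (1 + h • B)ᵀ) :
    ((σ ^ 2 * ((2 - h * (C₂ - C₁)) / (2 - h * C₂))) • V - R).PosSemidef := by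
  rcases Nat.eq_zero_or_pos n with hn | hn
  · subst hn
    refine PosSemidef.of_dotProduct_mulVec_nonneg (by ext i j; exact i.elim0) (fun x => by simp [dotProduct])
  -- invertibility and symmetry facts
  have hWdet : IsUnit W.det := isUnit_iff_ne_zero.mpr hW.det_pos.ne'
  have hVdet : IsUnit V.det := isUnit_iff_ne_zero.mpr hV.det_pos.ne'
  have hWinv : W * W⁻¹ = 1 := mul_nonsing_inv W hWdet
  have hWinv' : W⁻¹ * W = 1 := nonsing_inv_mul W hWdet
  have hWsym : Wᵀ = W := by rw [← ct_eq]; exact hW.1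
  have hWisym : (W⁻¹)ᵀ = W⁻¹ := by rw [transpose_nonsing_inv, hWsym]
  have hVinv : V⁻¹ = W⁻¹ * W⁻¹ := by rw [← hWsq, Matrix.mul_inv_rev]
  have hVisym : (V⁻¹)ᵀ = V⁻¹ := by rw [transpose_nonsing_inv, hVsym]
  have hRsym : Rᵀ = R := by rw [← ct_eq]; exact hR.1
  set M := W⁻¹ * (1 + S) * W⁻¹ with hM
  set T := W⁻¹ * R * W⁻¹ with hT
  have hMt : Mᵀ = W⁻¹ * (1 - S) * W⁻¹ := by
    rw [hM, transpose_mul, transpose_mul, hWisym, transpose_add, transpose_one, hSskew,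
      ← sub_eq_add_neg, Matrix.mul_assoc]
  have hTsym : Tᵀ = T := by
    rw [hT, transpose_mul, transpose_mul, hWisym, hRsym, Matrix.mul_assoc]
  -- transpose of B
  have hBt : Bᵀ = -(V⁻¹ * (1 - S)) := by
    rw [hB, transpose_neg, transpose_mul, hVisym, transpose_add, transpose_one, hSskew,
      ← sub_eq_add_neg]
  -- expand the Lyapunov equation
  have expand : (1 + h • B) * R * (1 + h • B)ᵀ
      = R + h • (B * R + R * Bᵀ + h • (B * R * Bᵀ)) := by
    rw [transpose_add, transpose_smul, transpose_one]
    simp only [Matrix.add_mul, Matrix.mul_add, Matrix.smul_mul, Matrix.mul_smul,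
      Matrix.one_mul, Matrix.mul_one, smul_add, smul_smul]
    module
  have key0 : h • ((2 * σ ^ 2) • (1 : Matrix (Fin n) (Fin n) ℝ)
      + (B * R + R * Bᵀ + h • (B * R * Bᵀ))) = 0 := by
    have h2 : R = R + ((2 * h * σ ^ 2) • (1 : Matrix (Fin n) (Fin n) ℝ)
        + h • (B * R + R * Bᵀ + h • (B * R * Bᵀ))) := by
      conv_lhs => rw [hLyap, expand]
      module
    have h3 := left_eq_add.mp h2
    rw [smul_add, smul_smul, show h * (2 * σ ^ 2) = 2 * h * σ ^ 2 from by ring]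
    exact h3
  have key1 : B * R + R * Bᵀ + h • (B * R * Bᵀ)
      = -((2 * σ ^ 2) • (1 : Matrix (Fin n) (Fin n) ℝ)) := by
    have h4 := (smul_eq_zero.mp key0).resolve_left hh0.ne'
    have h5 := add_eq_zero_iff_eq_neg.mp h4
    linear_combination (norm := module) h5
  -- substitute B
  have key2 : (1 + S) * V⁻¹ * R + R * (V⁻¹ * (1 - S))
      = (2 * σ ^ 2) • (1 : Matrix (Fin n) (Fin n) ℝ)
        + h • ((1 + S) * V⁻¹ * R * (V⁻¹ * (1 - S))) := by
    have e1 : B * R = -((1 + S) * V⁻¹ * R) := by rw [hB]; simp [Matrix.neg_mul]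
    have e2 : R * Bᵀ = -(R * (V⁻¹ * (1 - S))) := by rw [hBt]; simp [Matrix.mul_neg]
    have e3 : B * R * Bᵀ = (1 + S) * V⁻¹ * R * (V⁻¹ * (1 - S)) := by
      rw [hBt, hB]; simp [Matrix.neg_mul, Matrix.mul_neg]
    rw [e3, e1, e2] at key1
    linear_combination (norm := module) (-1 : ℝ) • key1
  -- conjugate by W⁻¹
  have c1 : M * T = W⁻¹ * ((1 + S) * V⁻¹ * R) * W⁻¹ := by
    rw [hM, hT, hVinv]; simp only [Matrix.mul_assoc]
  have c2 : T * Mᵀ = W⁻¹ * (R * (V⁻¹ * (1 - S))) * W⁻¹ := by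
    rw [hMt, hT, hVinv]; simp only [Matrix.mul_assoc]
  have c3 : M * T * Mᵀ = W⁻¹ * ((1 + S) * V⁻¹ * R * (V⁻¹ * (1 - S))) * W⁻¹ := by
    rw [hMt, hM, hT, hVinv]; simp only [Matrix.mul_assoc]
  have key3 : M * T + T * Mᵀ = (2 * σ ^ 2) • (W⁻¹ * W⁻¹) + h • (M * T * Mᵀ) := by
    rw [c3, c1, c2, show W⁻¹ * ((1 + S) * V⁻¹ * R) * W⁻¹ + W⁻¹ * (R * (V⁻¹ * (1 - S))) * W⁻¹
        = W⁻¹ * ((1 + S) * V⁻¹ * R + R * (V⁻¹ * (1 - S))) * W⁻¹ from by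
      noncomm_ring, key2]
    rw [Matrix.mul_add, Matrix.add_mul, Matrix.mul_smul, Matrix.smul_mul, Matrix.mul_smul,
      Matrix.smul_mul, Matrix.mul_one]
  have key4 : M + Mᵀ = (2 : ℝ) • (W⁻¹ * W⁻¹) := by
    rw [hM, hMt, ← Matrix.add_mul, ← Matrix.mul_add,
      show (1 + S) + (1 - S) = (2 : ℝ) • (1 : Matrix (Fin n) (Fin n) ℝ) from by module,
      Matrix.mul_smul, Matrix.smul_mul, Matrix.mul_one]
  -- T is positive semidefinite
  have hWiH : (W⁻¹)ᴴ = W⁻¹ := by rw [ct_eq]; exact hWisym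
  have hTpsd : T.PosSemidef := by
    have h1 := hR.posSemidef.mul_mul_conjTranspose_same W⁻¹
    rw [hWiH] at h1
    exact h1
  -- positivity of C₂ and step size
  have hC₂pos : 0 < C₂ := by
    by_contra hc
    push_neg at hc
    have : 2 / C₂ ≤ 0 := div_nonpos_of_nonneg_of_nonpos (by norm_num) hc
    linarith
  have h2C₂ : h * C₂ < 2 := by
    rw [lt_div_iff₀ hC₂pos] at hh
    linarith
  have hden : 0 < 2 - h * C₂ := by linarith
  -- extract top eigenvector of T
  obtain ⟨μ, u, huu, huEig, hTle⟩ := exists_top hn hTsym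
  have hu0 : u ≠ 0 := by
    intro h0
    rw [h0] at huu
    simp at huu
  have hμ0 : 0 ≤ μ := by
    have h1 := hTpsd.dotProduct_mulVec_nonneg u
    rw [star_trivial, huEig, dotProduct_smul, smul_eq_mul, huu, mul_one] at h1
    exact h1
  -- the vector y = W⁻¹ u and a = y ⬝ y
  set y := W⁻¹ *ᵥ u with hy
  set a := y ⬝ᵥ y with ha
  have hWy : W *ᵥ y = u := by
    rw [hy, Matrix.mulVec_mulVec, hWinv, Matrix.one_mulVec]
  have ha0 : 0 < a := by
    rcases lt_or_eq_of_le (dot_self_nonneg y) with h1 | h1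
    · exact h1
    · exfalso
      have hy0 : y = 0 := dotProduct_self_eq_zero.mp h1.symm
      rw [hy0] at hWy
      rw [← hWy] at hu0
      simp [Matrix.mulVec_zero] at hu0
  have haWW : u ⬝ᵥ ((W⁻¹ * W⁻¹) *ᵥ u) = a := by
    rw [← Matrix.mulVec_mulVec, dot_symm hWisym, ha, hy]
  -- quadratic form of key3 at u
  have hqMMt : u ⬝ᵥ (M *ᵥ u) + u ⬝ᵥ (Mᵀ *ᵥ u) = 2 * a := by
    have h1 := congrArg (fun X => u ⬝ᵥ (X *ᵥ u)) key4
    simp only [Matrix.add_mulVec, dotProduct_add, Matrix.smul_mulVec,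
      dotProduct_smul, smul_eq_mul] at h1
    rw [haWW] at h1
    exact h1
  have hqL : u ⬝ᵥ ((M * T) *ᵥ u) + u ⬝ᵥ ((T * Mᵀ) *ᵥ u) = 2 * μ * a := by
    have e1 : u ⬝ᵥ ((M * T) *ᵥ u) = μ * (u ⬝ᵥ (M *ᵥ u)) := by
      rw [← Matrix.mulVec_mulVec, huEig, Matrix.mulVec_smul, dotProduct_smul, smul_eq_mul]
    have e2 : u ⬝ᵥ ((T * Mᵀ) *ᵥ u) = μ * (u ⬝ᵥ (Mᵀ *ᵥ u)) := by
      rw [← Matrix.mulVec_mulVec, dot_symm hTsym, huEig, smul_dotProduct, smul_eq_mul]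
    rw [e1, e2, ← mul_add, hqMMt]
    ring
  have hqR : u ⬝ᵥ ((M * T * Mᵀ) *ᵥ u) = (Mᵀ *ᵥ u) ⬝ᵥ (T *ᵥ (Mᵀ *ᵥ u)) := by
    rw [← Matrix.mulVec_mulVec, ← Matrix.mulVec_mulVec, dot_mulVec']
  have keyq : 2 * μ * a = 2 * σ ^ 2 * a + h * ((Mᵀ *ᵥ u) ⬝ᵥ (T *ᵥ (Mᵀ *ᵥ u))) := by
    have h1 := congrArg (fun X => u ⬝ᵥ (X *ᵥ u)) key3
    simp only [Matrix.add_mulVec, dotProduct_add, Matrix.smul_mulVec,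
      dotProduct_smul, smul_eq_mul] at h1
    rw [haWW, hqR] at h1
    rw [← hqL]
    linarith [h1]
  -- bound the right-hand side using C₂
  have hMtnorm : ‖Mᵀ‖ = ‖M‖ := by rw [← ct_eq]; exact Matrix.l2_opNorm_conjTranspose M
  have hzz : (Mᵀ *ᵥ u) ⬝ᵥ (Mᵀ *ᵥ u) ≤ ‖M‖ ^ 2 := by
    have h1 := norm_mulVec_sq Mᵀ u
    rw [hMtnorm, huu, mul_one] at h1
    exact h1
  have hC₂a : ‖M‖ ^ 2 ≤ C₂ * a := by
    have h1 : (1 : ℝ) ≤ ‖V‖ * a := by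
      have h2 := norm_mulVec_sq W y
      rw [hWy, huu] at h2
      have e4 : Wᴴ * W = V := by rw [hW.1, hWsq]
      have h3 : ‖V‖ = ‖W‖ * ‖W‖ := by
        rw [← e4]
        exact Matrix.l2_opNorm_conjTranspose_mul_self W
      rw [← ha] at h2
      nlinarith [norm_nonneg W]
    calc ‖M‖ ^ 2 = ‖M‖ ^ 2 * 1 := by ring
      _ ≤ ‖M‖ ^ 2 * (‖V‖ * a) := by
          exact mul_le_mul_of_nonneg_left h1 (sq_nonneg _)
      _ = C₂ * a := by rw [hC₂]; ring
  have hTz : (Mᵀ *ᵥ u) ⬝ᵥ (T *ᵥ (Mᵀ *ᵥ u)) ≤ μ * (C₂ * a) := by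
    calc (Mᵀ *ᵥ u) ⬝ᵥ (T *ᵥ (Mᵀ *ᵥ u)) ≤ μ * ((Mᵀ *ᵥ u) ⬝ᵥ (Mᵀ *ᵥ u)) := quad_le hTle _
      _ ≤ μ * (C₂ * a) := by
          apply mul_le_mul_of_nonneg_left _ hμ0
          exact le_trans hzz hC₂a
  have hμle : μ ≤ 2 * σ ^ 2 / (2 - h * C₂) := by
    have e5 : 2 * μ * a - 2 * σ ^ 2 * a ≤ h * (μ * (C₂ * a)) := by
      have e6 := mul_le_mul_of_nonneg_left hTz hh0.le
      linarith [keyq, e6]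
    have e8 : μ * (2 - h * C₂) * a = 2 * μ * a - h * (μ * (C₂ * a)) := by ring
    have e7 : μ * (2 - h * C₂) * a ≤ 2 * σ ^ 2 * a := by linarith [e5, e8]
    rw [le_div_iff₀ hden]
    exact le_of_mul_le_mul_right e7 ha0
  -- the matrix K = (1+S) V⁻¹ (1-S) and its C₁ bound
  have hC₁nonneg : 0 ≤ C₁ := hC₁ ▸ norm_nonneg _
  set K := (1 + S) * V⁻¹ * (1 - S) with hK
  have hKt : Kᵀ = K := by
    rw [hK, transpose_mul, transpose_mul, hVisym, transpose_sub, transpose_add,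
      transpose_one, hSskew, sub_neg_eq_add, ← sub_eq_add_neg, ← Matrix.mul_assoc]
  have hKH : K.IsHermitian := by rw [Matrix.IsHermitian, ct_eq]; exact hKt
  have hKeig : ∀ i, hKH.eigenvalues i ≤ C₁ := by
    intro i
    have hEig : K *ᵥ ⇑(hKH.eigenvectorBasis i) = hKH.eigenvalues i • ⇑(hKH.eigenvectorBasis i) :=
      hKH.mulVec_eigenvectorBasis i
    set κ := hKH.eigenvalues i with hκ
    set v : Fin n → ℝ := ⇑(hKH.eigenvectorBasis i) with hv
    have hvv : v ⬝ᵥ v = 1 := unit_dot hKH i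
    set w' := W⁻¹ *ᵥ v with hw'
    have hw'w' : 0 < w' ⬝ᵥ w' := by
      rcases lt_or_eq_of_le (dot_self_nonneg w') with h1 | h1
      · exact h1
      · exfalso
        have h2 : w' = 0 := dotProduct_self_eq_zero.mp h1.symm
        have h3 : W *ᵥ w' = v := by
          rw [hw', Matrix.mulVec_mulVec, hWinv, Matrix.one_mulVec]
        rw [h2, Matrix.mulVec_zero] at h3
        rw [← h3] at hvv
        simp at hvv
    have hGW : (W⁻¹ * (1 + S) * V⁻¹ * (1 - S) * W) * W⁻¹ = W⁻¹ * K := by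
      rw [hK]; simp only [Matrix.mul_assoc, hWinv, Matrix.mul_one]
    have hGv : (W⁻¹ * (1 + S) * V⁻¹ * (1 - S) * W) *ᵥ w' = κ • w' := by
      rw [hw', Matrix.mulVec_mulVec, hGW, ← Matrix.mulVec_mulVec, hEig,
        Matrix.mulVec_smul]
    have h4 := norm_mulVec_sq (W⁻¹ * (1 + S) * V⁻¹ * (1 - S) * W) w'
    rw [hGv, ← hC₁] at h4
    rw [dotProduct_smul, smul_dotProduct, smul_eq_mul, smul_eq_mul, ← mul_assoc] at h4
    have h6 : κ * κ ≤ C₁ ^ 2 := le_of_mul_le_mul_right h4 hw'w'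
    have h7 : κ ^ 2 ≤ C₁ ^ 2 := by rw [sq]; exact h6
    exact le_of_sq_le_sq h7 hC₁nonneg
  have hKle : (C₁ • (1 : Matrix (Fin n) (Fin n) ℝ) - K).PosSemidef :=
    smul_one_sub_posSemidef hKH hKeig
  have hMMt : M * Mᵀ = W⁻¹ * K * W⁻¹ := by
    rw [hM, hMt, hK, hVinv]; simp only [Matrix.mul_assoc]
  -- the shifted matrix T' = T - σ²·1
  set T' := T - σ ^ 2 • (1 : Matrix (Fin n) (Fin n) ℝ) with hT'
  have hT'sym : T'ᵀ = T' := by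
    rw [hT', transpose_sub, transpose_smul, transpose_one, hTsym]
  have key5 : M * T' + T' * Mᵀ = h • (M * T * Mᵀ) := by
    have e9 : M * T' + T' * Mᵀ = M * T + T * Mᵀ - σ ^ 2 • (M + Mᵀ) := by
      rw [hT']
      simp only [Matrix.mul_sub, Matrix.sub_mul, Matrix.mul_smul, Matrix.smul_mul,
        Matrix.mul_one, Matrix.one_mul, smul_add]
      module
    rw [e9, key3, key4]
    module
  obtain ⟨ν, w, hww, hwEig, hT'le⟩ := exists_top hn hT'sym
  have hw0 : w ≠ 0 := by
    intro h0
    rw [h0] at hww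
    simp at hww
  set y' := W⁻¹ *ᵥ w with hy'
  set a' := y' ⬝ᵥ y' with ha'
  have hWy' : W *ᵥ y' = w := by
    rw [hy', Matrix.mulVec_mulVec, hWinv, Matrix.one_mulVec]
  have ha'0 : 0 < a' := by
    rcases lt_or_eq_of_le (dot_self_nonneg y') with h1 | h1
    · exact h1
    · exfalso
      have hy0 : y' = 0 := dotProduct_self_eq_zero.mp h1.symm
      rw [hy0, Matrix.mulVec_zero] at hWy'
      exact hw0 hWy'.symm
  have haWW' : w ⬝ᵥ ((W⁻¹ * W⁻¹) *ᵥ w) = a' := by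
    rw [← Matrix.mulVec_mulVec, dot_symm hWisym, ha', hy']
  have hqMMt' : w ⬝ᵥ (M *ᵥ w) + w ⬝ᵥ (Mᵀ *ᵥ w) = 2 * a' := by
    have h1 := congrArg (fun X => w ⬝ᵥ (X *ᵥ w)) key4
    simp only [Matrix.add_mulVec, dotProduct_add, Matrix.smul_mulVec,
      dotProduct_smul, smul_eq_mul] at h1
    rw [haWW'] at h1
    exact h1
  have hqL' : w ⬝ᵥ ((M * T') *ᵥ w) + w ⬝ᵥ ((T' * Mᵀ) *ᵥ w) = 2 * ν * a' := by
    have e1 : w ⬝ᵥ ((M * T') *ᵥ w) = ν * (w ⬝ᵥ (M *ᵥ w)) := by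
      rw [← Matrix.mulVec_mulVec, hwEig, Matrix.mulVec_smul, dotProduct_smul, smul_eq_mul]
    have e2 : w ⬝ᵥ ((T' * Mᵀ) *ᵥ w) = ν * (w ⬝ᵥ (Mᵀ *ᵥ w)) := by
      rw [← Matrix.mulVec_mulVec, dot_symm hT'sym, hwEig, smul_dotProduct, smul_eq_mul]
    rw [e1, e2, ← mul_add, hqMMt']
    ring
  have hqR' : w ⬝ᵥ ((M * T * Mᵀ) *ᵥ w) = (Mᵀ *ᵥ w) ⬝ᵥ (T *ᵥ (Mᵀ *ᵥ w)) := by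
    rw [← Matrix.mulVec_mulVec, ← Matrix.mulVec_mulVec, dot_mulVec']
  have keyq' : 2 * ν * a' = h * ((Mᵀ *ᵥ w) ⬝ᵥ (T *ᵥ (Mᵀ *ᵥ w))) := by
    have h1 := congrArg (fun X => w ⬝ᵥ (X *ᵥ w)) key5
    simp only [Matrix.add_mulVec, dotProduct_add, Matrix.smul_mulVec,
      dotProduct_smul, smul_eq_mul] at h1
    rw [hqR'] at h1
    rw [← hqL']
    linarith [h1]
  -- bound the right-hand side using C₁ and the bound on μ
  have hMMle : (Mᵀ *ᵥ w) ⬝ᵥ (Mᵀ *ᵥ w) ≤ C₁ * a' := by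
    have e10 : w ⬝ᵥ ((M * Mᵀ) *ᵥ w) = (Mᵀ *ᵥ w) ⬝ᵥ (Mᵀ *ᵥ w) := by
      rw [← Matrix.mulVec_mulVec, dot_mulVec']
    have e11 : w ⬝ᵥ ((M * Mᵀ) *ᵥ w) = y' ⬝ᵥ (K *ᵥ y') := by
      rw [hMMt, ← Matrix.mulVec_mulVec, ← Matrix.mulVec_mulVec, dot_symm hWisym, ← hy']
    rw [← e10, e11]
    calc y' ⬝ᵥ (K *ᵥ y') ≤ C₁ * (y' ⬝ᵥ y') := quad_le hKle y'
      _ = C₁ * a' := by rw [← ha']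
  have hTz' : (Mᵀ *ᵥ w) ⬝ᵥ (T *ᵥ (Mᵀ *ᵥ w)) ≤ (2 * σ ^ 2 / (2 - h * C₂)) * (C₁ * a') := by
    calc (Mᵀ *ᵥ w) ⬝ᵥ (T *ᵥ (Mᵀ *ᵥ w)) ≤ μ * ((Mᵀ *ᵥ w) ⬝ᵥ (Mᵀ *ᵥ w)) := quad_le hTle _
      _ ≤ (2 * σ ^ 2 / (2 - h * C₂)) * (C₁ * a') := by
          apply mul_le_mul hμle hMMle (dot_self_nonneg _)
          exact div_nonneg (by positivity) hden.le
  have hνle : ν ≤ h * C₁ * (2 * σ ^ 2 / (2 - h * C₂)) / 2 := by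
    have e11 : 2 * ν * a' ≤ h * ((2 * σ ^ 2 / (2 - h * C₂)) * (C₁ * a')) := by
      rw [keyq']
      exact mul_le_mul_of_nonneg_left hTz' hh0.le
    have e12 : h * ((2 * σ ^ 2 / (2 - h * C₂)) * (C₁ * a'))
        = (h * C₁ * (2 * σ ^ 2 / (2 - h * C₂))) * a' := by ring
    rw [e12] at e11
    have e13 : (2 * ν) * a' ≤ (h * C₁ * (2 * σ ^ 2 / (2 - h * C₂))) * a' := by
      linarith [e11]
    have := le_of_mul_le_mul_right e13 ha'0
    linarith
  -- final assembly
  set c := σ ^ 2 * ((2 - h * (C₂ - C₁)) / (2 - h * C₂)) with hc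
  have hcσ : ν ≤ c - σ ^ 2 := by
    have e14 : c - σ ^ 2 = h * C₁ * (2 * σ ^ 2 / (2 - h * C₂)) / 2 := by
      rw [hc]
      field_simp
      ring
    rw [e14]
    exact hνle
  have hfin : (c • (1 : Matrix (Fin n) (Fin n) ℝ) - T).PosSemidef := by
    have e15 : c • (1 : Matrix (Fin n) (Fin n) ℝ) - T
        = (ν • (1 : Matrix (Fin n) (Fin n) ℝ) - T')
          + (c - σ ^ 2 - ν) • (1 : Matrix (Fin n) (Fin n) ℝ) := by
      rw [hT']
      module
    rw [e15]
    exact hT'le.add (smul_one_psd _ (by linarith))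
  have hWTW : W * T * W = R := by
    rw [hT]
    simp only [← Matrix.mul_assoc]
    rw [hWinv, Matrix.one_mul, Matrix.mul_assoc, hWinv', Matrix.mul_one]
  have e16 : W * (c • (1 : Matrix (Fin n) (Fin n) ℝ) - T) * Wᴴ = c • V - R := by
    rw [ct_eq, hWsym, Matrix.mul_sub, Matrix.sub_mul, hWTW, Matrix.mul_smul,
      Matrix.mul_one, Matrix.smul_mul, hWsq]
  rw [← e16]
  exact hfin.mul_mul_conjTranspose_same W
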